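/- arXiv:1006.0026 — 5 statements merged into one kernel-verified Lean document; each statement's English description precedes it below -/
import Mathlib

section
/- Energy equals area for the mixed Dirichlet–Neumann problem (the energy assertion of the discrete uniformization theorems): Let g be the solution of a DN-BVP on a finite network with data (I, L, R, N, k). Then the Dirichlet energy of g equals k times the total flux through R: Σ_{{x,y} ∈ Ē} c(x,y)(g(x) − g(y))² = k · Σ_{x ∈ R} (∂g/∂n)(I)(x), where Ē is the set of edges with at least one endpoint in I. (Thus E(g) = W · H = Area(S) for the rectangle of width W = k and height H = Σ_{x ∈ R} ∂g/∂n(I)(x).) -/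
open Finset

variable {V : Type*}

/-- The combinatorial Laplacian of `u` at `x` in a network with conductance `c`. -/
noncomputable def netLap [Fintype V] (G : SimpleGraph V) [DecidableRel G.Adj]
    (c : V → V → ℝ) (u : V → ℝ) (x : V) : ℝ :=
  ∑ y ∈ G.neighborFinset x, c x y * (u x - u y)

/-- The normal derivative of `u` at `x` with respect to the set `F`. -/
noncomputable def netNormalDeriv [Fintype V] [DecidableEq V] (G : SimpleGraph V)
    [DecidableRel G.Adj] (c : V → V → ℝ) (F : Finset V) (u : V → ℝ) (x : V) : ℝ :=
  ∑ y ∈ (G.neighborFinset x).filter (· ∈ F), c x y * (u x - u y)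

/-- The vertex boundary `δF` of `F`: vertices outside `F` adjacent to some vertex of `F`. -/
def netVertexBoundary [Fintype V] [DecidableEq V] (G : SimpleGraph V) [DecidableRel G.Adj]
    (F : Finset V) : Finset V :=
  univ.filter fun x => x ∉ F ∧ ∃ y ∈ F, G.Adj x y

lemma two_mul_sum_edge [Fintype V] [DecidableEq V] (G : SimpleGraph V) [DecidableRel G.Adj]
    (f : V → V → ℝ) (hf : ∀ a b, f a b = f b a)
    (p : Sym2 V → Prop) [DecidablePred p] :
    2 * ∑ e ∈ G.edgeFinset.filter p, Sym2.lift ⟨f, hf⟩ e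
    = ∑ x : V, ∑ y : V, if G.Adj x y ∧ p s(x, y) then f x y else 0 := by
  rw [← Finset.sum_product']
  rw [← Finset.sum_filter]
  have hmaps : ∀ q ∈ (univ ×ˢ univ : Finset (V × V)).filter
      (fun q => G.Adj q.1 q.2 ∧ p s(q.1, q.2)), Sym2.mk q.1 q.2 ∈ G.edgeFinset.filter p := by
    rintro ⟨a, b⟩ hq
    simp only [mem_filter, mem_product, mem_univ, true_and] at hq ⊢
    simp only [SimpleGraph.mem_edgeFinset, SimpleGraph.mem_edgeSet]
    exact hq
  rw [← Finset.sum_fiberwise_of_maps_to hmaps (fun q => f q.1 q.2)]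
  rw [Finset.mul_sum]
  refine Finset.sum_congr rfl ?_
  intro e he
  induction e with
  | _ a b =>
    simp only [mem_filter, SimpleGraph.mem_edgeFinset, SimpleGraph.mem_edgeSet] at he
    have hab : a ≠ b := he.1.ne
    have hfiber : ((univ ×ˢ univ : Finset (V × V)).filter
        (fun q => G.Adj q.1 q.2 ∧ p s(q.1, q.2))).filter (fun q => Sym2.mk q.1 q.2 = s(a, b))
        = {(a, b), (b, a)} := by
      ext ⟨x, y⟩
      simp only [mem_filter, mem_product, mem_univ, true_and, mem_insert, mem_singleton,
        Prod.mk.injEq, Prod.ext_iff, Sym2.eq_iff]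
      constructor
      · rintro ⟨-, h | h⟩
        · exact Or.inl ⟨h.1, h.2⟩
        · exact Or.inr ⟨h.1, h.2⟩
      · rintro (⟨rfl, rfl⟩ | ⟨rfl, rfl⟩)
        · exact ⟨⟨he.1, he.2⟩, Or.inl ⟨rfl, rfl⟩⟩
        · exact ⟨⟨he.1.symm, by rw [Sym2.eq_swap]; exact he.2⟩, Or.inr ⟨rfl, rfl⟩⟩
    rw [hfiber, Finset.sum_pair (by simp [hab, Prod.ext_iff])]
    simp only [Sym2.lift_mk]
    rw [hf b a]; ring


/-- Energy equals area for the mixed Dirichlet–Neumann problem: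
`E(g) = k · Σ_{x ∈ R} ∂g/∂n(I)(x)`. -/
theorem dn_bvp_energy_eq_area [Fintype V] [DecidableEq V]
    (G : SimpleGraph V) [DecidableRel G.Adj] (c : V → V → ℝ)
    (hsymm : ∀ x y, c x y = c y x)
    (hpos : ∀ x y, G.Adj x y → 0 < c x y)
    (hzero : ∀ x y, ¬ G.Adj x y → c x y = 0)
    (I L R N : Finset V)
    (hIL : Disjoint I L) (hIR : Disjoint I R) (hIN : Disjoint I N)
    (hLR : Disjoint L R) (hLN : Disjoint L N) (hRN : Disjoint R N)
    (hcover : I ∪ L ∪ R ∪ N = univ)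
    (hbdry_nonadj : ∀ x ∈ L ∪ R ∪ N, ∀ y ∈ L ∪ R ∪ N, ¬ G.Adj x y)
    (hbdry_adj : ∀ x ∈ L ∪ R ∪ N, ∃ y ∈ I, G.Adj x y)
    (k : ℝ) (hk : 0 < k) (g : V → ℝ)
    (hgR : ∀ x ∈ R, g x = k) (hgL : ∀ x ∈ L, g x = 0)
    (hharm : ∀ x ∈ I, netLap G c g x = 0)
    (hneu : ∀ x ∈ N, netNormalDeriv G c I g x = 0) :
    ∑ e ∈ G.edgeFinset.filter (fun e => ∃ x ∈ e, x ∈ I),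
      Sym2.lift ⟨fun x y => c x y * (g x - g y) ^ 2,
        fun a b => by simp only [hsymm a b]; ring⟩ e
    = k * ∑ x ∈ R, netNormalDeriv G c I g x := by
  have h2 := two_mul_sum_edge G (fun x y => c x y * (g x - g y) ^ 2)
    (fun a b => by simp only [hsymm a b]; ring) (fun e => ∃ x ∈ e, x ∈ I)
  have hP : ∀ x y : V, (∃ z ∈ s(x, y), z ∈ I) ↔ (x ∈ I ∨ y ∈ I) := by
    intro x y
    constructor
    · rintro ⟨z, hz, hzI⟩
      rcases Sym2.mem_iff.1 hz with rfl | rfl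
      · exact Or.inl hzI
      · exact Or.inr hzI
    · rintro (h | h)
      · exact ⟨x, Sym2.mem_mk_left x y, h⟩
      · exact ⟨y, Sym2.mem_mk_right x y, h⟩
  -- the directed Dirichlet form
  set F : V → V → ℝ := fun x y =>
    if G.Adj x y ∧ (x ∈ I ∨ y ∈ I) then c x y * (g x * (g x - g y)) else 0 with hF
  have key : ∑ x : V, ∑ y : V,
      (if G.Adj x y ∧ (∃ z ∈ s(x, y), z ∈ I) then c x y * (g x - g y) ^ 2 else 0)
      = 2 * ∑ x : V, ∑ y : V, F x y := by
    have hpt : ∀ x y : V,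
        (if G.Adj x y ∧ (∃ z ∈ s(x, y), z ∈ I) then c x y * (g x - g y) ^ 2 else 0)
        = F x y + F y x := by
      intro x y
      by_cases h : G.Adj x y ∧ (x ∈ I ∨ y ∈ I)
      · have hc : G.Adj x y ∧ (∃ z ∈ s(x, y), z ∈ I) := ⟨h.1, (hP x y).2 h.2⟩
        have h' : G.Adj y x ∧ (y ∈ I ∨ x ∈ I) := ⟨h.1.symm, h.2.symm⟩
        simp only [hF]
        rw [if_pos hc, if_pos h, if_pos h', hsymm y x]
        ring
      · have h0 : ¬(G.Adj x y ∧ (∃ z ∈ s(x, y), z ∈ I)) := fun hc => h ⟨hc.1, (hP x y).1 hc.2⟩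
        have h' : ¬(G.Adj y x ∧ (y ∈ I ∨ x ∈ I)) := fun hc => h ⟨hc.1.symm, hc.2.symm⟩
        simp only [hF]
        rw [if_neg h0, if_neg h, if_neg h']
        ring
    simp only [hpt]
    simp only [Finset.sum_add_distrib]
    have hcomm : ∑ x : V, ∑ y : V, F y x = ∑ x : V, ∑ y : V, F x y := Finset.sum_comm
    rw [hcomm]
    ring
  -- evaluate the directed form vertex by vertex
  have hinner : ∀ x : V, ∑ y : V, F x y
      = g x * (if x ∈ I then netLap G c g x else netNormalDeriv G c I g x) := by
    intro x
    by_cases hx : x ∈ I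
    · rw [if_pos hx]
      have hFx : ∀ y, F x y
          = if y ∈ G.neighborFinset x then c x y * (g x * (g x - g y)) else 0 := by
        intro y
        simp only [hF, SimpleGraph.mem_neighborFinset, hx, true_or, and_true]
      simp only [hFx]
      rw [Finset.sum_ite_mem, Finset.univ_inter, netLap, Finset.mul_sum]
      exact Finset.sum_congr rfl fun y _ => by ring
    · rw [if_neg hx]
      have hFx : ∀ y, F x y
          = if G.Adj x y ∧ y ∈ I then c x y * (g x * (g x - g y)) else 0 := by
        intro y
        simp only [hF, hx, false_or]
      simp only [hFx]
      rw [← Finset.sum_filter]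
      have hset : univ.filter (fun y => G.Adj x y ∧ y ∈ I)
          = (G.neighborFinset x).filter (· ∈ I) := by
        ext y
        simp [SimpleGraph.mem_neighborFinset]
      rw [hset, netNormalDeriv, Finset.mul_sum]
      exact Finset.sum_congr rfl fun y _ => by ring
  -- split the vertex sum over the partition
  have hd1 : Disjoint (I ∪ L) R := Finset.disjoint_union_left.2 ⟨hIR, hLR⟩
  have hd2 : Disjoint (I ∪ L ∪ R) N :=
    Finset.disjoint_union_left.2 ⟨Finset.disjoint_union_left.2 ⟨hIN, hLN⟩, hRN⟩
  have hT : ∑ x : V, g x * (if x ∈ I then netLap G c g x else netNormalDeriv G c I g x)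
      = k * ∑ x ∈ R, netNormalDeriv G c I g x := by
    rw [← hcover, Finset.sum_union hd2, Finset.sum_union hd1, Finset.sum_union hIL]
    have hI0 : ∑ x ∈ I, g x * (if x ∈ I then netLap G c g x else netNormalDeriv G c I g x)
        = 0 := Finset.sum_eq_zero fun x hx => by rw [if_pos hx, hharm x hx, mul_zero]
    have hL0 : ∑ x ∈ L, g x * (if x ∈ I then netLap G c g x else netNormalDeriv G c I g x)
        = 0 := Finset.sum_eq_zero fun x hx => by rw [hgL x hx, zero_mul]
    have hN0 : ∑ x ∈ N, g x * (if x ∈ I then netLap G c g x else netNormalDeriv G c I g x)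
        = 0 := Finset.sum_eq_zero fun x hx => by
      rw [if_neg (Finset.disjoint_right.1 hIN hx), hneu x hx, mul_zero]
    have hRk : ∑ x ∈ R, g x * (if x ∈ I then netLap G c g x else netNormalDeriv G c I g x)
        = k * ∑ x ∈ R, netNormalDeriv G c I g x := by
      rw [Finset.mul_sum]
      exact Finset.sum_congr rfl fun x hx => by
        rw [if_neg (Finset.disjoint_right.1 hIR hx), hgR x hx]
    rw [hI0, hL0, hN0, hRk]
    ring
  simp only [hinner] at key
  rw [hT] at key
  rw [key] at h2
  linarith
end

section
/- Energy assertion of the discrete uniformization of an annulus (pure Dirichlet problem): Let (V,E,c) be a finite network whose vertex set is partitioned as V = I ⊔ E₁ ⊔ E₂ with E₁, E₂ nonempty, no two vertices of E₁ ∪ E₂ adjacent, and every vertex of E₁ ∪ E₂ adjacent to some vertex of I. Let k > 0 and let g : V → ℝ satisfy g = k on E₁, g = 0 on E₂, and Δg(x) = 0 for all x ∈ I. Then the Dirichlet energy of g equals k · C, where C = Σ_{x ∈ E₁} (∂g/∂n)(I)(x); that is, Σ_{{x,y} ∈ Ē} c(x,y)(g(x) − g(y))² = k · C, the area of the straight Euclidean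 cylinder of height k and circumference C. -/
open Finset

variable {V : Type*}

/-- Energy assertion of the discrete uniformization of an annulus (pure Dirichlet problem):
the Dirichlet energy of `g` equals `k · C` where `C = Σ_{x ∈ E₁} ∂g/∂n(I)(x)`, the area of
the straight Euclidean cylinder of height `k` and circumference `C`. -/
theorem annulus_energy_eq_area [Fintype V] [DecidableEq V]
    (G : SimpleGraph V) [DecidableRel G.Adj] (c : V → V → ℝ)
    (hsymm : ∀ x y, c x y = c y x)
    (hpos : ∀ x y, G.Adj x y → 0 < c x y)
    (hzero : ∀ x y, ¬ G.Adj x y → c x y = 0)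
    (I E1 E2 : Finset V)
    (hE1ne : E1.Nonempty) (hE2ne : E2.Nonempty)
    (hIE1 : Disjoint I E1) (hIE2 : Disjoint I E2) (hE1E2 : Disjoint E1 E2)
    (hcover : I ∪ E1 ∪ E2 = univ)
    (hbdry_nonadj : ∀ x ∈ E1 ∪ E2, ∀ y ∈ E1 ∪ E2, ¬ G.Adj x y)
    (hbdry_adj : ∀ x ∈ E1 ∪ E2, ∃ y ∈ I, G.Adj x y)
    (k : ℝ) (hk : 0 < k) (g : V → ℝ)
    (hgE1 : ∀ x ∈ E1, g x = k) (hgE2 : ∀ x ∈ E2, g x = 0)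
    (hharm : ∀ x ∈ I, netLap G c g x = 0) :
    ∑ e ∈ G.edgeFinset.filter (fun e => ∃ x ∈ e, x ∈ I),
      Sym2.lift ⟨fun x y => c x y * (g x - g y) ^ 2,
        fun a b => by simp only [hsymm a b]; ring⟩ e
    = k * ∑ x ∈ E1, netNormalDeriv G c I g x := by
  classical
  set f : V → V → ℝ := fun x y => c x y * g x * (g x - g y) with hf
  set P : Finset (V × V) := (univ ×ˢ univ).filter
    (fun p => G.Adj p.1 p.2 ∧ (p.1 ∈ I ∨ p.2 ∈ I)) with hP
  have hnbI : ∀ x ∈ E1 ∪ E2, ∀ y, G.Adj x y → y ∈ I := by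
    intro x hx y hxy
    by_contra hyI
    have hy : y ∈ E1 ∪ E2 := by
      have hyu := mem_univ y
      rw [← hcover] at hyu
      simp only [mem_union] at hyu ⊢
      tauto
    exact hbdry_nonadj x hx y hy hxy
  have stepA : ∑ e ∈ G.edgeFinset.filter (fun e => ∃ x ∈ e, x ∈ I),
      Sym2.lift ⟨fun x y => c x y * (g x - g y) ^ 2,
        fun a b => by simp only [hsymm a b]; ring⟩ e
      = ∑ p ∈ P, f p.1 p.2 := by
    have hmaps : ∀ p ∈ P, Sym2.mk p.1 p.2 ∈
        G.edgeFinset.filter (fun e => ∃ x ∈ e, x ∈ I) := by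
      rintro ⟨x, y⟩ hp
      rw [hP, mem_filter] at hp
      simp only [mem_filter, SimpleGraph.mem_edgeFinset, SimpleGraph.mem_edgeSet]
      refine ⟨hp.2.1, ?_⟩
      rcases hp.2.2 with h | h
      · exact ⟨x, Sym2.mem_mk_left x y, h⟩
      · exact ⟨y, Sym2.mem_mk_right x y, h⟩
    rw [← Finset.sum_fiberwise_of_maps_to hmaps (fun p => f p.1 p.2)]
    refine Finset.sum_congr rfl ?_
    intro e he
    induction e using Sym2.ind with
    | _ a b =>
      rw [mem_filter, SimpleGraph.mem_edgeFinset, SimpleGraph.mem_edgeSet] at he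
      obtain ⟨hadj, hI⟩ := he
      have hI' : a ∈ I ∨ b ∈ I := by simpa using hI
      have hfib : P.filter (fun p => Sym2.mk p.1 p.2 = s(a, b)) = {(a, b), (b, a)} := by
        ext ⟨x, y⟩
        simp only [hP, mem_filter, mem_product, mem_univ, true_and, mem_insert,
          mem_singleton, Prod.mk.injEq, Sym2.eq_iff]
        constructor
        · rintro ⟨-, h⟩; exact h
        · rintro (⟨rfl, rfl⟩ | ⟨rfl, rfl⟩)
          · exact ⟨⟨hadj, hI'⟩, Or.inl ⟨rfl, rfl⟩⟩
          · exact ⟨⟨hadj.symm, hI'.symm⟩, Or.inr ⟨rfl, rfl⟩⟩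
      have hne : ((a, b) : V × V) ≠ (b, a) :=
        fun h => hadj.ne (congrArg Prod.fst h)
      rw [hfib, Finset.sum_pair hne]
      simp only [hf, Sym2.lift_mk]
      rw [hsymm b a]; ring
  rw [stepA, hP, Finset.sum_filter, Finset.sum_product]
  have hsplit : (univ : Finset V) = (I ∪ E1) ∪ E2 := by
    rw [← hcover]
  have hd2 : Disjoint (I ∪ E1) E2 := disjoint_union_left.2 ⟨hIE2, hE1E2⟩
  rw [Finset.sum_congr hsplit (fun _ _ => rfl), Finset.sum_union hd2, Finset.sum_union hIE1]
  have hIzero : ∀ x ∈ I, (∑ y, if G.Adj x y ∧ (x ∈ I ∨ y ∈ I) then f x y else 0) = 0 := by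
    intro x hx
    have h1 : (∑ y, if G.Adj x y ∧ (x ∈ I ∨ y ∈ I) then f x y else 0)
        = ∑ y ∈ G.neighborFinset x, f x y := by
      rw [SimpleGraph.neighborFinset_eq_filter, Finset.sum_filter]
      refine Finset.sum_congr rfl fun y _ => ?_
      simp [hx]
    rw [h1]
    have h2 : ∑ y ∈ G.neighborFinset x, f x y = g x * netLap G c g x := by
      rw [netLap, Finset.mul_sum]
      refine Finset.sum_congr rfl fun y _ => ?_
      simp only [hf]; ring
    rw [h2, hharm x hx, mul_zero]
  have hE2zero : ∀ x ∈ E2, (∑ y, if G.Adj x y ∧ (x ∈ I ∨ y ∈ I) then f x y else 0) = 0 := by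
    intro x hx
    refine Finset.sum_eq_zero fun y _ => ?_
    have : f x y = 0 := by simp [hf, hgE2 x hx]
    simp [this]
  have hE1val : ∀ x ∈ E1, (∑ y, if G.Adj x y ∧ (x ∈ I ∨ y ∈ I) then f x y else 0)
      = k * netNormalDeriv G c I g x := by
    intro x hx
    have hxI : ∀ y, G.Adj x y → y ∈ I := hnbI x (mem_union_left _ hx)
    have h1 : (∑ y, if G.Adj x y ∧ (x ∈ I ∨ y ∈ I) then f x y else 0)
        = ∑ y ∈ G.neighborFinset x, f x y := by
      rw [SimpleGraph.neighborFinset_eq_filter, Finset.sum_filter]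
      refine Finset.sum_congr rfl fun y _ => ?_
      by_cases h : G.Adj x y
      · simp [h, hxI y h]
      · simp [h]
    have hfull : (G.neighborFinset x).filter (· ∈ I) = G.neighborFinset x := by
      refine Finset.filter_eq_self.2 fun y hy => ?_
      exact hxI y ((SimpleGraph.mem_neighborFinset G x y).1 hy)
    rw [h1, netNormalDeriv, hfull, Finset.mul_sum]
    refine Finset.sum_congr rfl fun y _ => ?_
    simp only [hf, hgE1 x hx]; ring
  rw [Finset.sum_congr rfl hIzero, Finset.sum_congr rfl hE2zero,
    Finset.sum_congr rfl hE1val, Finset.sum_const, Finset.sum_const,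
    smul_zero, smul_zero, add_zero, zero_add, Finset.mul_sum]
end

section
/- All level cuts carry the same flux (Proposition on lengths of level curves, first assertion, graph form): Let (V,E,c) be a finite network with V = I ⊔ E₁ ⊔ E₂, where E₁, E₂ are nonempty, no two vertices of E₁ ∪ E₂ are adjacent, and every vertex of E₁ ∪ E₂ is adjacent to some vertex of I. Let k > 0 and let g : V → ℝ satisfy g = k on E₁, g = 0 on E₂, and Δg(x) = 0 for all x ∈ I. Let S ⊆ I be a set with no two vertices of S adjacent such that V ∖ S = O₁ ⊔ O₂, no vertex of O₁ is adjacent to any vertex of O₂, E₁ ⊆ O₁ and E₂ ⊆ O₂. Then Σ_{x ∈ S} Σ_{y ∈ O₁, y adjacent to x} c(x,y)(g(y) − g(x)) = Σ_{x ∈ E₁} (∂g/∂n)(I)(x); that is, every separating level cut has the same flux-gradient length as the boundary component E₁. -/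
open Finset

variable {V : Type*}

lemma nbr_filter [Fintype V] [DecidableEq V] (G : SimpleGraph V) [DecidableRel G.Adj]
    (x : V) (B : Finset V) :
    (G.neighborFinset x).filter (· ∈ B) = B.filter (G.Adj x) := by
  ext y; simp [and_comm]

lemma swap_sum [Fintype V] [DecidableEq V] (G : SimpleGraph V) [DecidableRel G.Adj]
    (F : V → V → ℝ) (A B : Finset V) :
    ∑ x ∈ A, ∑ y ∈ (G.neighborFinset x).filter (· ∈ B), F x y
    = ∑ y ∈ B, ∑ x ∈ (G.neighborFinset y).filter (· ∈ A), F x y := by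
  simp only [nbr_filter, sum_filter]
  rw [Finset.sum_comm]
  refine sum_congr rfl fun y _ => sum_congr rfl fun x _ => ?_
  exact if_congr (G.adj_comm x y) rfl rfl

lemma sum_lap_eq_boundary [Fintype V] [DecidableEq V] (G : SimpleGraph V) [DecidableRel G.Adj]
    (c : V → V → ℝ) (hsymm : ∀ x y, c x y = c y x) (g : V → ℝ) (A : Finset V) :
    ∑ x ∈ A, netLap G c g x
    = ∑ x ∈ A, ∑ y ∈ (G.neighborFinset x).filter (· ∉ A), c x y * (g x - g y) := by
  have hz : ∑ x ∈ A, ∑ y ∈ (G.neighborFinset x).filter (· ∈ A), c x y * (g x - g y) = 0 := by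
    have h1 : ∑ x ∈ A, ∑ y ∈ (G.neighborFinset x).filter (· ∈ A), c x y * (g x - g y)
        = ∑ x ∈ A, ∑ y ∈ A, if G.Adj x y then c x y * (g x - g y) else 0 := by
      simp only [nbr_filter, sum_filter]
    have h2 : ∑ x ∈ A, ∑ y ∈ A, (if G.Adj x y then c x y * (g x - g y) else 0)
        = ∑ x ∈ A, ∑ y ∈ A, (if G.Adj y x then c y x * (g y - g x) else 0) :=
      Finset.sum_comm
    have h3 : ∀ x y : V, (if G.Adj y x then c y x * (g y - g x) else 0)
        = - (if G.Adj x y then c x y * (g x - g y) else 0) := by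
      intro x y
      by_cases h : G.Adj x y
      · rw [if_pos h, if_pos (h.symm), hsymm y x]; ring
      · rw [if_neg h, if_neg (fun h' => h h'.symm), neg_zero]
    rw [h1]
    have h4 : ∑ x ∈ A, ∑ y ∈ A, (if G.Adj y x then c y x * (g y - g x) else 0)
        = - ∑ x ∈ A, ∑ y ∈ A, (if G.Adj x y then c x y * (g x - g y) else 0) := by
      rw [← Finset.sum_neg_distrib]
      refine sum_congr rfl fun x _ => ?_
      rw [← Finset.sum_neg_distrib]
      exact sum_congr rfl fun y _ => h3 x y
    have := h2.trans h4
    linarith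
  have hsplit0 : ∀ x ∈ A, netLap G c g x
      = (∑ y ∈ (G.neighborFinset x).filter (· ∈ A), c x y * (g x - g y))
      + ∑ y ∈ (G.neighborFinset x).filter (· ∉ A), c x y * (g x - g y) := by
    intro x _
    exact (Finset.sum_filter_add_sum_filter_not _ _ _).symm
  rw [Finset.sum_congr rfl hsplit0, Finset.sum_add_distrib, hz, zero_add]

/-- All level cuts carry the same flux: for a separating set `S` between the two boundary
components of the annulus, the flux through `S` toward the `O₁`-side equals the flux
through the boundary component `E₁`. -/
theorem level_cut_flux_eq_boundary_flux [Fintype V] [DecidableEq V]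
    (G : SimpleGraph V) [DecidableRel G.Adj] (c : V → V → ℝ)
    (hsymm : ∀ x y, c x y = c y x)
    (hpos : ∀ x y, G.Adj x y → 0 < c x y)
    (hzero : ∀ x y, ¬ G.Adj x y → c x y = 0)
    (I E1 E2 : Finset V)
    (hE1ne : E1.Nonempty) (hE2ne : E2.Nonempty)
    (hIE1 : Disjoint I E1) (hIE2 : Disjoint I E2) (hE1E2 : Disjoint E1 E2)
    (hcover : I ∪ E1 ∪ E2 = univ)
    (hbdry_nonadj : ∀ x ∈ E1 ∪ E2, ∀ y ∈ E1 ∪ E2, ¬ G.Adj x y)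
    (hbdry_adj : ∀ x ∈ E1 ∪ E2, ∃ y ∈ I, G.Adj x y)
    (k : ℝ) (hk : 0 < k) (g : V → ℝ)
    (hgE1 : ∀ x ∈ E1, g x = k) (hgE2 : ∀ x ∈ E2, g x = 0)
    (hharm : ∀ x ∈ I, netLap G c g x = 0)
    (S O1 O2 : Finset V) (hSsub : S ⊆ I)
    (hSnadj : ∀ x ∈ S, ∀ y ∈ S, ¬ G.Adj x y)
    (hO12 : Disjoint O1 O2) (hsplit : univ \ S = O1 ∪ O2)
    (hOnadj : ∀ x ∈ O1, ∀ y ∈ O2, ¬ G.Adj x y)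
    (hE1O1 : E1 ⊆ O1) (hE2O2 : E2 ⊆ O2) :
    ∑ x ∈ S, ∑ y ∈ (G.neighborFinset x).filter (· ∈ O1), c x y * (g y - g x)
    = ∑ x ∈ E1, netNormalDeriv G c I g x := by
  -- S and O1 are disjoint
  have hSO1 : ∀ y ∈ S, y ∉ O1 := by
    intro y hyS hyO1
    have : y ∈ univ \ S := hsplit ▸ mem_union_left _ hyO1
    exact (mem_sdiff.mp this).2 hyS
  -- outside O1 and S means O2
  have hnotO1 : ∀ y, y ∉ O1 → y ∉ S → y ∈ O2 := by
    intro y h1 h2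
    have : y ∈ univ \ S := mem_sdiff.mpr ⟨mem_univ y, h2⟩
    rw [hsplit] at this
    exact (mem_union.mp this).resolve_left h1
  -- Step A: on E1 the normal derivative w.r.t. I is the full Laplacian
  have stepA : ∀ x ∈ E1, netNormalDeriv G c I g x = netLap G c g x := by
    intro x hx
    unfold netNormalDeriv netLap
    rw [Finset.filter_true_of_mem]
    intro y hy
    rw [SimpleGraph.mem_neighborFinset] at hy
    have hyuniv : y ∈ I ∪ E1 ∪ E2 := hcover ▸ mem_univ y
    rcases mem_union.mp hyuniv with h | h
    · rcases mem_union.mp h with h | h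
      · exact h
      · exact absurd hy (hbdry_nonadj x (mem_union_left _ hx) y (mem_union_left _ h)).elim
    · exact absurd hy (hbdry_nonadj x (mem_union_left _ hx) y (mem_union_right _ h)).elim
  -- Step B: sum of Laplacians over O1 equals sum over E1 (harmonicity on I)
  have stepB : ∑ x ∈ E1, netLap G c g x = ∑ x ∈ O1, netLap G c g x := by
    refine Finset.sum_subset hE1O1 ?_
    intro x hxO1 hxE1
    have hxI : x ∈ I := by
      have hxuniv : x ∈ I ∪ E1 ∪ E2 := hcover ▸ mem_univ x
      rcases mem_union.mp hxuniv with h | h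
      · rcases mem_union.mp h with h | h
        · exact h
        · exact absurd h hxE1
      · exact absurd hxO1 (disjoint_right.mp hO12 (hE2O2 h))
    exact hharm x hxI
  -- Step C: Green's identity on O1, and the outside neighbors of O1 lie in S
  have stepC : ∑ x ∈ O1, netLap G c g x
      = ∑ x ∈ O1, ∑ y ∈ (G.neighborFinset x).filter (· ∈ S), c x y * (g x - g y) := by
    rw [sum_lap_eq_boundary G c hsymm g O1]
    refine sum_congr rfl fun x hx => ?_
    congr 1
    refine Finset.filter_congr fun y hy => ?_
    rw [SimpleGraph.mem_neighborFinset] at hy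
    constructor
    · intro hyO1
      by_contra hyS
      exact hOnadj x hx y (hnotO1 y hyO1 hyS) hy
    · intro hyS
      exact hSO1 y hyS
  -- Step D: swap the double sum
  have stepD : ∑ x ∈ S, ∑ y ∈ (G.neighborFinset x).filter (· ∈ O1), c x y * (g y - g x)
      = ∑ x ∈ O1, ∑ y ∈ (G.neighborFinset x).filter (· ∈ S), c x y * (g x - g y) := by
    rw [swap_sum G (fun x y => c x y * (g y - g x)) S O1]
    refine sum_congr rfl fun x _ => sum_congr rfl fun y _ => ?_
    rw [hsymm y x]
  rw [stepD, ← stepC, ← stepB]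
  exact (sum_congr rfl stepA).symm
end

section
/- Existence and uniqueness for the discrete Dirichlet problem: Let (V,E,c) be a finite connected network, let D ⊆ V be nonempty, and let φ : D → ℝ. Then there exists a unique function g : V → ℝ such that g(x) = φ(x) for all x ∈ D and Δg(x) = 0 for all x ∈ V ∖ D. -/
open Finset

variable {V : Type*}

section Aux

variable [Fintype V] (G : SimpleGraph V) [DecidableRel G.Adj] (c : V → V → ℝ)

lemma netLap_eq_sum_univ (hzero : ∀ x y, ¬ G.Adj x y → c x y = 0) (u : V → ℝ) (x : V) :
    netLap G c u x = ∑ y, c x y * (u x - u y) := by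
  unfold netLap
  refine Finset.sum_subset (Finset.subset_univ _) fun y _ hy => ?_
  rw [hzero x y (by simpa [SimpleGraph.mem_neighborFinset] using hy), zero_mul]

lemma netLap_add (u v : V → ℝ) (x : V) :
    netLap G c (u + v) x = netLap G c u x + netLap G c v x := by
  unfold netLap
  rw [← Finset.sum_add_distrib]
  exact Finset.sum_congr rfl fun y _ => by simp only [Pi.add_apply]; ring

lemma netLap_sub (u v : V → ℝ) (x : V) :
    netLap G c (u - v) x = netLap G c u x - netLap G c v x := by
  unfold netLap
  rw [← Finset.sum_sub_distrib]
  exact Finset.sum_congr rfl fun y _ => by simp only [Pi.sub_apply]; ring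

lemma netLap_smul (a : ℝ) (u : V → ℝ) (x : V) :
    netLap G c (a • u) x = a * netLap G c u x := by
  unfold netLap
  rw [Finset.mul_sum]
  exact Finset.sum_congr rfl fun y _ => by simp only [Pi.smul_apply, smul_eq_mul]; ring

lemma harmonic_eq_zero
    (hsymm : ∀ x y, c x y = c y x)
    (hpos : ∀ x y, G.Adj x y → 0 < c x y)
    (hzero : ∀ x y, ¬ G.Adj x y → c x y = 0)
    (hconn : G.Connected)
    (D : Finset V) (hD : D.Nonempty) (h : V → ℝ)
    (h0 : ∀ x ∈ D, h x = 0) (hh : ∀ x ∉ D, netLap G c h x = 0) : ∀ x, h x = 0 := by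
  have hc0 : ∀ x y, 0 ≤ c x y := by
    intro x y
    by_cases hxy : G.Adj x y
    · exact (hpos x y hxy).le
    · rw [hzero x y hxy]
  have hprod : ∀ x, h x * (∑ y, c x y * (h x - h y)) = 0 := by
    intro x
    rw [← netLap_eq_sum_univ G c hzero]
    by_cases hx : x ∈ D
    · rw [h0 x hx, zero_mul]
    · rw [hh x hx, mul_zero]
  have e1 : ∑ x, ∑ y, c x y * h x * (h x - h y) = 0 := by
    have : ∀ x : V, ∑ y, c x y * h x * (h x - h y) = h x * ∑ y, c x y * (h x - h y) := by
      intro x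
      rw [Finset.mul_sum]
      exact Finset.sum_congr rfl fun y _ => by ring
    simp only [this, hprod, Finset.sum_const_zero]
  have e2 : ∑ x, ∑ y, c x y * h y * (h y - h x) = 0 := by
    rw [Finset.sum_comm]
    calc ∑ y, ∑ x, c x y * h y * (h y - h x)
        = ∑ y, ∑ x, c y x * h y * (h y - h x) :=
          Finset.sum_congr rfl fun y _ => Finset.sum_congr rfl fun x _ => by rw [hsymm]
      _ = 0 := e1
  have key : ∑ x, ∑ y, c x y * (h x - h y) ^ 2 = 0 := by
    calc ∑ x, ∑ y, c x y * (h x - h y) ^ 2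
        = (∑ x, ∑ y, c x y * h x * (h x - h y)) + ∑ x, ∑ y, c x y * h y * (h y - h x) := by
          rw [← Finset.sum_add_distrib]
          refine Finset.sum_congr rfl fun x _ => ?_
          rw [← Finset.sum_add_distrib]
          exact Finset.sum_congr rfl fun y _ => by ring
      _ = 0 := by rw [e1, e2, add_zero]
  have hadjeq : ∀ x y, G.Adj x y → h x = h y := by
    intro x y hxy
    have hnn : ∀ x ∈ (univ : Finset V), (0:ℝ) ≤ ∑ y, c x y * (h x - h y) ^ 2 :=
      fun x _ => Finset.sum_nonneg fun y _ => mul_nonneg (hc0 x y) (sq_nonneg _)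
    have h1 := (Finset.sum_eq_zero_iff_of_nonneg hnn).mp key x (mem_univ x)
    have h2 := (Finset.sum_eq_zero_iff_of_nonneg
      (fun y _ => mul_nonneg (hc0 x y) (sq_nonneg _))).mp h1 y (mem_univ y)
    have h3 : (h x - h y) ^ 2 = 0 := (mul_eq_zero.mp h2).resolve_left (hpos x y hxy).ne'
    have := sq_eq_zero_iff.mp h3
    linarith
  have hreach : ∀ x y : V, G.Reachable x y → h x = h y := by
    intro x y hr
    obtain ⟨w⟩ := hr
    induction w with
    | nil => rfl
    | cons a _ ih => exact (hadjeq _ _ a).trans ih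
  obtain ⟨d, hd⟩ := hD
  intro x
  rw [hreach x d (hconn x d), h0 d hd]

end Aux

/-- Existence and uniqueness for the discrete Dirichlet problem on a finite connected
network: given boundary data `φ` on a nonempty set `D`, there is a unique function `g`
agreeing with `φ` on `D` and harmonic off `D`. -/
theorem dirichlet_problem_existence_uniqueness [Fintype V] [DecidableEq V]
    (G : SimpleGraph V) [DecidableRel G.Adj] (c : V → V → ℝ)
    (hsymm : ∀ x y, c x y = c y x)
    (hpos : ∀ x y, G.Adj x y → 0 < c x y)
    (hzero : ∀ x y, ¬ G.Adj x y → c x y = 0)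
    (hconn : G.Connected)
    (D : Finset V) (hD : D.Nonempty) (φ : {x // x ∈ D} → ℝ) :
    ∃! g : V → ℝ, (∀ x (hx : x ∈ D), g x = φ ⟨x, hx⟩)
      ∧ (∀ x ∉ D, netLap G c g x = 0) := by
  classical
  set ext : ({x : V // x ∉ D} → ℝ) → V → ℝ :=
    fun f x => if hx : x ∉ D then f ⟨x, hx⟩ else 0 with hext
  have ext_mem : ∀ f x (hx : x ∈ D), ext f x = 0 := fun f x hx => dif_neg (not_not.mpr hx)
  have ext_add : ∀ f g, ext (f + g) = ext f + ext g := by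
    intro f g
    funext x
    by_cases hx : x ∈ D <;> simp [hext, hx]
  have ext_smul : ∀ (a : ℝ) f, ext (a • f) = a • ext f := by
    intro a f
    funext x
    by_cases hx : x ∈ D <;> simp [hext, hx]
  let T : ({x : V // x ∉ D} → ℝ) →ₗ[ℝ] ({x : V // x ∉ D} → ℝ) :=
    { toFun := fun f w => netLap G c (ext f) w.1
      map_add' := fun f g => funext fun w => by
        simp only [ext_add, netLap_add, Pi.add_apply]
      map_smul' := fun a f => funext fun w => by
        simp only [ext_smul, netLap_smul, RingHom.id_apply, Pi.smul_apply, smul_eq_mul] }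
  have hinj : Function.Injective T := by
    rw [injective_iff_map_eq_zero]
    intro f hf
    have hz := harmonic_eq_zero G c hsymm hpos hzero hconn D hD (ext f)
      (fun x hx => ext_mem f x hx)
      (fun x hx => congrFun hf ⟨x, hx⟩)
    funext w
    have := hz w.1
    simpa [hext, w.2] using this
  have hsurj : Function.Surjective T := LinearMap.injective_iff_surjective.mp hinj
  set φe : V → ℝ := fun x => if hx : x ∈ D then φ ⟨x, hx⟩ else 0 with hφe
  obtain ⟨f, hf⟩ := hsurj (fun w => - netLap G c φe w.1)
  refine ⟨φe + ext f, ⟨?_, ?_⟩, ?_⟩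
  · intro x hx
    simp [hφe, hext, hx]
  · intro x hx
    have h1 : netLap G c (ext f) x = - netLap G c φe x := congrFun hf ⟨x, hx⟩
    rw [netLap_add, h1]
    ring
  · rintro g ⟨hg1, hg2⟩
    have hz := harmonic_eq_zero G c hsymm hpos hzero hconn D hD (g - (φe + ext f))
      (fun x hx => by
        simp [Pi.sub_apply, hg1 x hx, hφe, hext, hx])
      (fun x hx => by
        have h1 : netLap G c (ext f) x = - netLap G c φe x := congrFun hf ⟨x, hx⟩
        rw [netLap_sub, netLap_add, h1, hg2 x hx]
        ring)
    funext x
    have := hz x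
    simp only [Pi.sub_apply, sub_eq_zero] at this
    exact this
end

section
/- Strict positivity of the flux (the height of the uniformizing rectangle is positive): Let g be the solution of a DN-BVP on a finite connected network with data (I, L, R, N, k), where L and R are nonempty and k > 0. Then H = Σ_{x ∈ R} (∂g/∂n)(I)(x) > 0. -/
open Finset

variable {V : Type*}

lemma exists_diff_edge (G : SimpleGraph V) (g : V → ℝ) :
    ∀ {a b : V}, G.Walk a b → g a ≠ g b → ∃ x y, G.Adj x y ∧ g x ≠ g y := by
  intro a b p
  induction p with
  | nil => intro h; exact absurd rfl h
  | @cons u v w h p ih =>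
    intro hne
    by_cases h1 : g u = g v
    · exact ih (h1 ▸ hne)
    · exact ⟨u, v, h, h1⟩

lemma netLap_eq_univ [Fintype V] (G : SimpleGraph V) [DecidableRel G.Adj]
    (c : V → V → ℝ) (hzero : ∀ x y, ¬ G.Adj x y → c x y = 0) (u : V → ℝ) (x : V) :
    netLap G c u x = ∑ y ∈ univ, c x y * (u x - u y) := by
  apply Finset.sum_subset (Finset.subset_univ _)
  intro y _ hy
  rw [hzero x y (by simpa [SimpleGraph.mem_neighborFinset] using hy)]
  ring

/-- Strict positivity of the flux: the height `H = Σ_{x ∈ R} ∂g/∂n(I)(x)` of the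
uniformizing rectangle is positive. -/
theorem dn_bvp_flux_positive [Fintype V] [DecidableEq V]
    (G : SimpleGraph V) [DecidableRel G.Adj] (c : V → V → ℝ)
    (hsymm : ∀ x y, c x y = c y x)
    (hpos : ∀ x y, G.Adj x y → 0 < c x y)
    (hzero : ∀ x y, ¬ G.Adj x y → c x y = 0)
    (hconn : G.Connected)
    (I L R N : Finset V)
    (hLne : L.Nonempty) (hRne : R.Nonempty)
    (hIL : Disjoint I L) (hIR : Disjoint I R) (hIN : Disjoint I N)
    (hLR : Disjoint L R) (hLN : Disjoint L N) (hRN : Disjoint R N)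
    (hcover : I ∪ L ∪ R ∪ N = univ)
    (hbdry_nonadj : ∀ x ∈ L ∪ R ∪ N, ∀ y ∈ L ∪ R ∪ N, ¬ G.Adj x y)
    (hbdry_adj : ∀ x ∈ L ∪ R ∪ N, ∃ y ∈ I, G.Adj x y)
    (k : ℝ) (hk : 0 < k) (g : V → ℝ)
    (hgR : ∀ x ∈ R, g x = k) (hgL : ∀ x ∈ L, g x = 0)
    (hharm : ∀ x ∈ I, netLap G c g x = 0)
    (hneu : ∀ x ∈ N, netNormalDeriv G c I g x = 0) :
    0 < ∑ x ∈ R, netNormalDeriv G c I g x := by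
  classical
  -- nonnegativity of c
  have hcnn : ∀ x y, 0 ≤ c x y := by
    intro x y
    by_cases h : G.Adj x y
    · exact (hpos x y h).le
    · rw [hzero x y h]
  -- boundary vertices have all neighbors in I
  have hbdryI : ∀ x ∈ L ∪ R ∪ N, ∀ y ∈ G.neighborFinset x, y ∈ I := by
    intro x hx y hy
    rw [SimpleGraph.mem_neighborFinset] at hy
    have hyu : y ∈ I ∪ L ∪ R ∪ N := hcover ▸ Finset.mem_univ y
    rcases Finset.mem_union.mp hyu with h' | hN
    · rcases Finset.mem_union.mp h' with h'' | hR
      · rcases Finset.mem_union.mp h'' with hI | hL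
        · exact hI
        · exact absurd hy (hbdry_nonadj x hx y (by simp [hL]))
      · exact absurd hy (hbdry_nonadj x hx y (by simp [hR]))
    · exact absurd hy (hbdry_nonadj x hx y (by simp [hN]))
  -- on the boundary, normal derivative w.r.t. I equals the Laplacian
  have hnd_eq : ∀ x ∈ L ∪ R ∪ N, netNormalDeriv G c I g x = netLap G c g x := by
    intro x hx
    unfold netNormalDeriv netLap
    rw [Finset.filter_true_of_mem (hbdryI x hx)]
  -- the double sum A
  set A := ∑ x ∈ univ, ∑ y ∈ univ, c x y * g x * (g x - g y) with hA
  have hT : ∑ x ∈ univ, g x * netLap G c g x = A := by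
    refine Finset.sum_congr rfl fun x _ => ?_
    rw [netLap_eq_univ G c hzero, Finset.mul_sum]
    exact Finset.sum_congr rfl fun y _ => by ring
  -- energy identity: E = 2A
  have hE : ∑ x ∈ univ, ∑ y ∈ univ, c x y * (g x - g y) ^ 2 = 2 * A := by
    have h1 : ∑ x ∈ univ, ∑ y ∈ univ, c x y * (g x - g y) ^ 2
        = (∑ x ∈ univ, ∑ y ∈ univ, c x y * g x * (g x - g y))
          + ∑ x ∈ univ, ∑ y ∈ univ, c x y * g y * (g y - g x) := by
      rw [← Finset.sum_add_distrib]
      refine Finset.sum_congr rfl fun x _ => ?_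
      rw [← Finset.sum_add_distrib]
      exact Finset.sum_congr rfl fun y _ => by ring
    have h2 : ∑ x ∈ univ, ∑ y ∈ univ, c x y * g y * (g y - g x) = A := by
      rw [Finset.sum_comm]
      refine Finset.sum_congr rfl fun y _ => Finset.sum_congr rfl fun x _ => ?_
      rw [hsymm]
    rw [h1, h2, hA]; ring
  -- the energy is positive: there is an edge on which g differs
  have hedge : ∃ x y, G.Adj x y ∧ g x ≠ g y := by
    obtain ⟨a, ha⟩ := hLne
    obtain ⟨b, hb⟩ := hRne
    obtain ⟨p⟩ := hconn.preconnected a b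
    refine exists_diff_edge G g p ?_
    rw [hgL a ha, hgR b hb]
    exact fun h => absurd h.symm hk.ne'
  have hEpos : 0 < ∑ x ∈ univ, ∑ y ∈ univ, c x y * (g x - g y) ^ 2 := by
    obtain ⟨x0, y0, hadj, hne⟩ := hedge
    refine Finset.sum_pos' (fun x _ => Finset.sum_nonneg fun y _ =>
      mul_nonneg (hcnn x y) (sq_nonneg _)) ⟨x0, Finset.mem_univ _, ?_⟩
    refine Finset.sum_pos' (fun y _ => mul_nonneg (hcnn x0 y) (sq_nonneg _))
      ⟨y0, Finset.mem_univ _, ?_⟩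
    have hd : g x0 - g y0 ≠ 0 := sub_ne_zero.mpr hne
    exact mul_pos (hpos x0 y0 hadj) (by positivity)
  -- split the sum of g * Lap over the partition
  have hdisj1 : Disjoint (I ∪ L) R := Finset.disjoint_union_left.mpr ⟨hIR, hLR⟩
  have hdisj2 : Disjoint (I ∪ L ∪ R) N :=
    Finset.disjoint_union_left.mpr ⟨Finset.disjoint_union_left.mpr ⟨hIN, hLN⟩, hRN⟩
  have hsplit : ∑ x ∈ univ, g x * netLap G c g x
      = k * ∑ x ∈ R, netNormalDeriv G c I g x := by
    rw [← hcover, Finset.sum_union hdisj2, Finset.sum_union hdisj1, Finset.sum_union hIL]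
    have hIz : ∑ x ∈ I, g x * netLap G c g x = 0 :=
      Finset.sum_eq_zero fun x hx => by rw [hharm x hx, mul_zero]
    have hLz : ∑ x ∈ L, g x * netLap G c g x = 0 :=
      Finset.sum_eq_zero fun x hx => by rw [hgL x hx, zero_mul]
    have hNz : ∑ x ∈ N, g x * netLap G c g x = 0 :=
      Finset.sum_eq_zero fun x hx => by
        rw [← hnd_eq x (by simp [hx]), hneu x hx, mul_zero]
    have hRz : ∑ x ∈ R, g x * netLap G c g x = k * ∑ x ∈ R, netNormalDeriv G c I g x := by
      rw [Finset.mul_sum]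
      refine Finset.sum_congr rfl fun x hx => ?_
      rw [hgR x hx, hnd_eq x (by simp [hx])]
    rw [hIz, hLz, hNz, hRz]; ring
  have hkH : 0 < k * ∑ x ∈ R, netNormalDeriv G c I g x := by
    have : (0:ℝ) < 2 * A := hE ▸ hEpos
    have hA' : 0 < A := by linarith
    rw [← hsplit, hT]; exact hA'
  by_contra h
  push_neg at h
  nlinarith
end
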